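/- Suppose in addition to U_K≠∅ that one of the hypotheses (b), (d1b), (K) is satisfied. Then (i) every χ ∈ R^K X_{fK} has an open neighbourhood V_χ in X_0 such that the restriction of R^K to the set X_f ∩ (R^K)^{-1}(V_χ) is injective, and (ii) the restriction of R^K to the set X_f ∩ (∪_{χ∈R^K X_{fK}} (R^K)^{-1}(V_χ)) is injective. -/

import Mathlib

set_option linter.unusedSectionVars false

open Set

noncomputable section

/-- The compact interval `[-r,0]`. -/
abbrev Icc0 (r : ℝ) : Set ℝ := Set.Icc (-r) 0

/-- Extension of a continuous map on `[-r,0]` to `ℝ`, by the value `0` outside. -/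
def extFun {r : ℝ} {E : Type*} [TopologicalSpace E] [Zero E] (φ : C(Icc0 r, E)) : ℝ → E :=
  fun t => if h : t ∈ Icc0 r then φ ⟨t, h⟩ else 0

section extlemmas

variable {r : ℝ} {E : Type*} [NormedAddCommGroup E] [NormedSpace ℝ E]

lemma extFun_add (φ ψ : C(Icc0 r, E)) : extFun (φ + ψ) = extFun φ + extFun ψ := by
  funext t; by_cases h : t ∈ Icc0 r <;> simp [extFun, h]

lemma extFun_zero : extFun (0 : C(Icc0 r, E)) = 0 := by
  funext t; by_cases h : t ∈ Icc0 r <;> simp [extFun, h]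

lemma extFun_smul (c : ℝ) (φ : C(Icc0 r, E)) : extFun (c • φ) = c • extFun φ := by
  funext t; by_cases h : t ∈ Icc0 r <;> simp [extFun, h]

end extlemmas

/-- The space `C¹([-r,0],E)`, realized as the closed subspace of pairs `(φ, φ')` in
`C([-r,0],E) × C([-r,0],E)` such that `φ` is differentiable on `[-r,0]` with derivative `φ'`. -/
def C1sub (r : ℝ) (E : Type*) [NormedAddCommGroup E] [NormedSpace ℝ E] :
    Submodule ℝ (C(Icc0 r, E) × C(Icc0 r, E)) where
  carrier := {p | ∀ t ∈ Icc0 r, HasDerivWithinAt (extFun p.1) (extFun p.2 t) (Icc0 r) t}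
  add_mem' := by
    intro p q hp hq t ht
    have h := (hp t ht).add (hq t ht)
    have e1 : extFun (p + q).1 = fun s => extFun p.1 s + extFun q.1 s := by
      simp [Prod.fst_add, extFun_add]; rfl
    have e2 : extFun (p + q).2 t = extFun p.2 t + extFun q.2 t := by
      simp [Prod.snd_add, extFun_add]
    rw [e1, e2]; exact h
  zero_mem' := by
    intro t ht
    have e1 : extFun (0 : C(Icc0 r, E) × C(Icc0 r, E)).1 = fun _ : ℝ => (0 : E) := by
      simp [extFun_zero]; rfl
    have e2 : extFun (0 : C(Icc0 r, E) × C(Icc0 r, E)).2 t = 0 := by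
      simp [extFun_zero]
    rw [e1, e2]; exact hasDerivWithinAt_const _ _ _
  smul_mem' := by
    intro c p hp t ht
    have h := (hp t ht).const_smul c
    have e1 : extFun (c • p).1 = fun s => c • extFun p.1 s := by
      simp [Prod.smul_fst, extFun_smul]; rfl
    have e2 : extFun (c • p).2 t = c • extFun p.2 t := by
      simp [Prod.smul_snd, extFun_smul]
    rw [e1, e2]; exact h

/-- The Banach space `C¹([-r,0],E)`. -/
abbrev C1 (r : ℝ) (E : Type*) [NormedAddCommGroup E] [NormedSpace ℝ E] := ↥(C1sub r E)

section C1ops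

variable {r : ℝ} {E : Type*} [NormedAddCommGroup E] [NormedSpace ℝ E]

/-- Evaluation `φ(t)` of `φ ∈ C¹([-r,0],E)` (extended by `0` outside `[-r,0]`). -/
def evC (φ : C1 r E) (t : ℝ) : E := extFun φ.1.1 t

/-- Evaluation `φ'(t)` of the derivative of `φ ∈ C¹([-r,0],E)`. -/
def dvC (φ : C1 r E) (t : ℝ) : E := extFun φ.1.2 t

end C1ops

/-- The continuous linear map `ℝ → (Fin n → ℝ)` sending `x` to the vector `x·e_ν`. -/
def sCLM (n : ℕ) (ν : Fin n) : ℝ →L[ℝ] (Fin n → ℝ) :=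
  ContinuousLinearMap.pi (fun j => if j = ν then ContinuousLinearMap.id ℝ ℝ else 0)

/-- `ψ · e_ν` for a continuous map `ψ`. -/
def CMsingle {r : ℝ} {n : ℕ} (ν : Fin n) (φ : C(Icc0 r, ℝ)) : C(Icc0 r, Fin n → ℝ) :=
  ⟨fun t => sCLM n ν (φ t), (sCLM n ν).continuous.comp φ.continuous⟩

lemma extFun_CMsingle {r : ℝ} {n : ℕ} (ν : Fin n) (φ : C(Icc0 r, ℝ)) (t : ℝ) :
    extFun (CMsingle ν φ) t = sCLM n ν (extFun φ t) := by
  by_cases h : t ∈ Icc0 r <;> simp [extFun, CMsingle, h]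

/-- `ψ · e_ν ∈ C¹([-r,0],ℝⁿ)` for a scalar function `ψ ∈ C¹([-r,0],ℝ)`. -/
def singleC1 {r : ℝ} {n : ℕ} (ν : Fin n) (φ : C1 r ℝ) : C1 r (Fin n → ℝ) :=
  ⟨(CMsingle ν φ.1.1, CMsingle ν φ.1.2), by
    intro t ht
    have h := ((sCLM n ν).hasFDerivAt).comp_hasDerivWithinAt t (φ.2 t ht)
    have e1 : extFun (CMsingle ν φ.1.1) = (sCLM n ν) ∘ (extFun φ.1.1) := by
      funext s; exact extFun_CMsingle ν φ.1.1 s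
    rw [show (CMsingle ν φ.1.1, CMsingle ν φ.1.2).1 = CMsingle ν φ.1.1 from rfl,
      show (CMsingle ν φ.1.1, CMsingle ν φ.1.2).2 = CMsingle ν φ.1.2 from rfl,
      e1, extFun_CMsingle]
    exact h⟩

/-- The linear map `ℝⁿ → C¹([-r,0],ℝⁿ)`, `x ↦ Σ_ν x_ν ψ_ν · e_ν` (the map `Y·x`). -/
def Ymap {r : ℝ} {n : ℕ} (ψ : Fin n → C1 r ℝ) : (Fin n → ℝ) →ₗ[ℝ] C1 r (Fin n → ℝ) where
  toFun x := ∑ ν, x ν • singleC1 ν (ψ ν)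
  map_add' x y := by simp [add_smul, Finset.sum_add_distrib]
  map_smul' c x := by simp [smul_smul, Finset.smul_sum]

/-- The closed subspace `X₀ = {φ ∈ C¹ : φ'(0) = 0}`. -/
def X0sub (r : ℝ) (n : ℕ) : Submodule ℝ (C1 r (Fin n → ℝ)) where
  carrier := {φ | dvC φ 0 = 0}
  add_mem' := by
    intro φ ψ hφ hψ
    have : dvC (φ + ψ) 0 = dvC φ 0 + dvC ψ 0 := by
      simp [dvC, extFun_add]
    rw [Set.mem_setOf_eq] at *
    rw [this, hφ, hψ, add_zero]
  zero_mem' := by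
    show dvC (0 : C1 r (Fin n → ℝ)) 0 = 0
    simp [dvC, extFun_zero]
  smul_mem' := by
    intro c φ hφ
    have : dvC (c • φ) 0 = c • dvC φ 0 := by simp [dvC, extFun_smul]
    rw [Set.mem_setOf_eq] at *
    rw [this, hφ, smul_zero]

/-- The projection-like map `R φ = φ − Y·φ'(0)`. -/
def RKmap {r : ℝ} {n : ℕ} (ψ : Fin n → C1 r ℝ) (φ : C1 r (Fin n → ℝ)) : C1 r (Fin n → ℝ) :=
  φ - Ymap ψ (dvC φ 0)

section diffeos

variable {E : Type*} [NormedAddCommGroup E] [NormedSpace ℝ E]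
variable {E' : Type*} [NormedAddCommGroup E'] [NormedSpace ℝ E']

/-- `f` defines a `C¹`-diffeomorphism from `s` onto `t`: `f` is continuously differentiable
on `s`, injective on `s`, maps `s` onto `t`, and has a continuously differentiable inverse. -/
def IsC1DiffeoOn (f : E → E') (s : Set E) (t : Set E') : Prop :=
  ContDiffOn ℝ 1 f s ∧ Set.InjOn f s ∧ f '' s = t ∧
    ∃ g : E' → E, ContDiffOn ℝ 1 g t ∧ Set.InvOn g f s t

/-- The tangent cone of `X ⊆ E` at `x`: all velocities `c'(0)` of continuously differentiable
curves in `X` through `x`. -/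
def tangentSet (X : Set E) (x : E) : Set E :=
  {v | ∃ (c : ℝ → E) (ε : ℝ), 0 < ε ∧ ContDiffOn ℝ 1 c (Set.Ioo (-ε) ε) ∧
      (∀ s ∈ Set.Ioo (-ε) ε, c s ∈ X) ∧ c 0 = x ∧ HasDerivWithinAt c v (Set.Ioo (-ε) ε) 0}

/-- `X` is a continuously differentiable submanifold of codimension `m` of `E`. -/
def IsC1SubmanifoldCodim (X : Set E) (m : ℕ) : Prop :=
  ∀ x ∈ X, ∃ (O : Set E) (Φ : E → E) (H Q : Submodule ℝ E),
    IsOpen O ∧ x ∈ O ∧ IsClosed (H : Set E) ∧ IsCompl H Q ∧ Module.finrank ℝ Q = m ∧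
    IsOpen (Φ '' O) ∧ IsC1DiffeoOn Φ O (Φ '' O) ∧ Φ '' (X ∩ O) = (H : Set E) ∩ (Φ '' O)

/-- `X` is a continuously differentiable submanifold of `E`. -/
def IsC1Submanifold (X : Set E) : Prop :=
  ∀ x ∈ X, ∃ (O : Set E) (Φ : E → E) (H : Submodule ℝ E),
    IsOpen O ∧ x ∈ O ∧ IsClosed (H : Set E) ∧
    IsOpen (Φ '' O) ∧ IsC1DiffeoOn Φ O (Φ '' O) ∧ Φ '' (X ∩ O) = (H : Set E) ∩ (Φ '' O)

/-- `A` is an almost graph over `H`. -/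
def IsAlmostGraphOver (A : Set E) (H : Set E) : Prop :=
  ∃ (dm : Set E) (α : E → E), dm ⊆ H ∧ ContDiffOn ℝ 1 α dm ∧
    (∀ ζ ∈ dm ∩ A, α ζ = 0) ∧ (∀ ζ ∈ dm \ A, α ζ ∉ H) ∧
    IsC1DiffeoOn (fun ζ => ζ + α ζ) dm A

end diffeos

/-- The data of the delay differential system
`x'(t) = g(x(t-d_1(Lx_t)),…,x(t-d_kk(Lx_t)))`. -/
structure Setting (r : ℝ) (n kk : ℕ) (F : Type*) [NormedAddCommGroup F] [NormedSpace ℝ F] where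
  /-- The continuous linear map `L : C([-r,0],ℝⁿ) → F`. -/
  L : C(Icc0 r, Fin n → ℝ) →L[ℝ] F
  /-- The open set `W ⊆ F`. -/
  W : Set F
  Wopen : IsOpen W
  /-- The delay functions `d_k : W → [0,r]`. -/
  d : Fin kk → F → ℝ
  d_smooth : ∀ k, ContDiffOn ℝ 1 (d k) W
  d_mem : ∀ k, ∀ w ∈ W, d k w ∈ Set.Icc (0:ℝ) r
  /-- The open set `V ⊆ (ℝⁿ)^kk`. -/
  V : Set (Fin kk → Fin n → ℝ)
  Vopen : IsOpen V
  /-- The right hand side function `g : V → ℝⁿ`. -/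
  g : (Fin kk → Fin n → ℝ) → Fin n → ℝ
  g_smooth : ContDiffOn ℝ 1 g V

namespace Setting

variable {r : ℝ} {n kk : ℕ} {F : Type*} [NormedAddCommGroup F] [NormedSpace ℝ F]
variable (S : Setting r n kk F)

/-- `L` applied to (the `C⁰`-part of) `φ ∈ C¹`. -/
def Lof (φ : C1 r (Fin n → ℝ)) : F := S.L φ.1.1

/-- `φ̂ = (φ(-d_1(Lφ)),…,φ(-d_kk(Lφ)))`. -/
def hat (φ : C1 r (Fin n → ℝ)) : Fin kk → Fin n → ℝ := fun k => evC φ (-(S.d k (S.Lof φ)))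

/-- The domain `U = {φ ∈ C¹ : Lφ ∈ W, φ̂ ∈ V}`. -/
def U : Set (C1 r (Fin n → ℝ)) := {φ | S.Lof φ ∈ S.W ∧ S.hat φ ∈ S.V}

/-- The right hand side `f(φ) = g(φ̂)`. -/
def fmap (φ : C1 r (Fin n → ℝ)) : Fin n → ℝ := S.g (S.hat φ)

/-- The solution manifold `X_f = {φ ∈ U : φ'(0) = f(φ)}`. -/
def Xf : Set (C1 r (Fin n → ℝ)) := {φ | φ ∈ S.U ∧ dvC φ 0 = S.fmap φ}

/-- `W_J = {w ∈ W : d_j(w)=0 for j∈J, d_k(w)>0 for k∉J}`. -/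
def WJ (J : Finset (Fin kk)) : Set F :=
  {w | w ∈ S.W ∧ (∀ j ∈ J, S.d j w = 0) ∧ ∀ k ∉ J, 0 < S.d k w}

/-- `W^J = {w ∈ W : d_k(w)>0 for k∉J}`. -/
def WupJ (J : Finset (Fin kk)) : Set F :=
  {w | w ∈ S.W ∧ ∀ k ∉ J, 0 < S.d k w}

/-- `U_J = U ∩ L⁻¹(W_J)`. -/
def UJ (J : Finset (Fin kk)) : Set (C1 r (Fin n → ℝ)) := {φ | φ ∈ S.U ∧ S.Lof φ ∈ S.WJ J}

/-- `U^J = U ∩ L⁻¹(W^J)`. -/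
def UupJ (J : Finset (Fin kk)) : Set (C1 r (Fin n → ℝ)) := {φ | φ ∈ S.U ∧ S.Lof φ ∈ S.WupJ J}

/-- `X_{fJ} = X_f ∩ U_J`. -/
def XfJ (J : Finset (Fin kk)) : Set (C1 r (Fin n → ℝ)) := S.Xf ∩ S.UJ J

/-- Hypothesis (b): `g` is bounded. -/
def HypB : Prop := ∃ M, ∀ v ∈ S.V, ‖S.g v‖ ≤ M

/-- Hypothesis (d1b): `d₁ = 0` on `W` and `g` is bounded on subsets of `V` with bounded
first component. -/
def HypD1B (hk : 0 < kk) : Prop :=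
  (∀ w ∈ S.W, S.d ⟨0, hk⟩ w = 0) ∧
  ∀ B : Set (Fin n → ℝ), Bornology.IsBounded B →
    Bornology.IsBounded (S.g '' {v | v ∈ S.V ∧ v ⟨0, hk⟩ ∈ B})

/-- The partial derivative `∂_{(k-1)n+ν} g_μ (φ̂)`. -/
def dgCoeff (φ : C1 r (Fin n → ℝ)) (k : Fin kk) (ν : Fin n) (μ : Fin n) : ℝ :=
  fderivWithin ℝ S.g S.V (S.hat φ) (Pi.single k (Pi.single ν 1)) μ

/-- The right hand side of the formula for `Df_μ(φ)χ`. -/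
def dFormula (φ χ : C1 r (Fin n → ℝ)) (μ : Fin n) : ℝ :=
  ∑ k, ∑ ν, S.dgCoeff φ k ν μ *
    (evC χ (-(S.d k (S.Lof φ))) ν -
      dvC φ (-(S.d k (S.Lof φ))) ν * fderivWithin ℝ (S.d k) S.W (S.Lof φ) (S.Lof χ))

/-- The map `R^J(φ) = φ − Y_J(Lφ)·φ'(0)` of Section 4 of the paper. -/
def RJmap (y : Fin n → F → C1 r ℝ) (φ : C1 r (Fin n → ℝ)) : C1 r (Fin n → ℝ) :=
  φ - Ymap (fun ν => y ν (S.Lof φ)) (dvC φ 0)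

end Setting


variable {r : ℝ} {n kk : ℕ} {F : Type*} [NormedAddCommGroup F] [NormedSpace ℝ F]
  [FiniteDimensional ℝ F]

section aux
variable {r : ℝ} {E : Type*} [NormedAddCommGroup E] [NormedSpace ℝ E]

/-- Evaluation as a linear map. -/
def evCl (r : ℝ) (E : Type*) [NormedAddCommGroup E] [NormedSpace ℝ E] (t : ℝ) :
    C1 r E →ₗ[ℝ] E where
  toFun φ := evC φ t
  map_add' φ ψ := by
    simp only [evC]
    have : ((φ + ψ : C1 r E) : C(Icc0 r, E) × C(Icc0 r, E)).1 = φ.1.1 + ψ.1.1 := rfl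
    rw [this, extFun_add]; rfl
  map_smul' c φ := by
    simp only [evC]
    have : ((c • φ : C1 r E) : C(Icc0 r, E) × C(Icc0 r, E)).1 = c • φ.1.1 := rfl
    rw [this, extFun_smul]; rfl

def dvCl (r : ℝ) (E : Type*) [NormedAddCommGroup E] [NormedSpace ℝ E] (t : ℝ) :
    C1 r E →ₗ[ℝ] E where
  toFun φ := dvC φ t
  map_add' φ ψ := by
    simp only [dvC]
    have : ((φ + ψ : C1 r E) : C(Icc0 r, E) × C(Icc0 r, E)).2 = φ.1.2 + ψ.1.2 := rfl
    rw [this, extFun_add]; rfl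
  map_smul' c φ := by
    simp only [dvC]
    have : ((c • φ : C1 r E) : C(Icc0 r, E) × C(Icc0 r, E)).2 = c • φ.1.2 := rfl
    rw [this, extFun_smul]; rfl

lemma evCl_apply (t : ℝ) (φ : C1 r E) : evCl r E t φ = evC φ t := rfl
lemma dvCl_apply (t : ℝ) (φ : C1 r E) : dvCl r E t φ = dvC φ t := rfl

lemma evC_sub (φ ξ : C1 r E) (t : ℝ) : evC (φ - ξ) t = evC φ t - evC ξ t :=
  map_sub (evCl r E t) φ ξ

lemma dvC_sub (φ ξ : C1 r E) (t : ℝ) : dvC (φ - ξ) t = dvC φ t - dvC ξ t :=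
  map_sub (dvCl r E t) φ ξ

lemma norm_evC_le (φ : C1 r E) {t : ℝ} (ht : t ∈ Icc0 r) : ‖evC φ t‖ ≤ ‖φ‖ := by
  have h1 : evC φ t = φ.1.1 ⟨t, ht⟩ := by simp [evC, extFun, ht]
  rw [h1]
  calc ‖φ.1.1 ⟨t, ht⟩‖ ≤ ‖φ.1.1‖ := ContinuousMap.norm_coe_le_norm _ _
    _ ≤ ‖φ.1‖ := norm_fst_le _
    _ = ‖φ‖ := rfl

lemma continuousOn_extFun (f : C(Icc0 r, E)) : ContinuousOn (extFun f) (Icc0 r) := by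
  rw [continuousOn_iff_continuous_restrict]
  have : Set.restrict (Icc0 r) (extFun f) = f := by
    funext x
    simp [Set.restrict, extFun, x.2]
  rw [show (Icc0 r).domRestrict (extFun f) = f from this]
  exact f.continuous

lemma continuousOn_evC (φ : C1 r E) : ContinuousOn (fun t => evC φ t) (Icc0 r) :=
  continuousOn_extFun φ.1.1

end aux
section aux2
variable {r : ℝ} {n : ℕ}

lemma evC_singleC1 (ν : Fin n) (φ : C1 r ℝ) (t : ℝ) :
    evC (singleC1 ν φ) t = sCLM n ν (evC φ t) := by
  simp only [evC, singleC1]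
  exact extFun_CMsingle ν φ.1.1 t

lemma dvC_singleC1 (ν : Fin n) (φ : C1 r ℝ) (t : ℝ) :
    dvC (singleC1 ν φ) t = sCLM n ν (dvC φ t) := by
  simp only [dvC, singleC1]
  exact extFun_CMsingle ν φ.1.2 t

lemma sCLM_apply (ν j : Fin n) (c : ℝ) : sCLM n ν c j = if j = ν then c else 0 := by
  simp [sCLM, ContinuousLinearMap.pi]
  split <;> simp [*]

lemma evC_Ymap (ψ : Fin n → C1 r ℝ) (x : Fin n → ℝ) (t : ℝ) (j : Fin n) :
    evC (Ymap ψ x) t j = x j * evC (ψ j) t := by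
  have h : evC (Ymap ψ x) t = ∑ ν, x ν • sCLM n ν (evC (ψ ν) t) := by
    rw [← evCl_apply]
    show evCl r (Fin n → ℝ) t (∑ ν, x ν • singleC1 ν (ψ ν)) = _
    rw [map_sum]
    congr 1; funext ν
    rw [map_smul, evCl_apply, evC_singleC1]
  rw [h]
  rw [Finset.sum_apply]
  have : ∀ ν ∈ Finset.univ, (x ν • sCLM n ν (evC (ψ ν) t)) j
      = if ν = j then x j * evC (ψ j) t else 0 := by
    intro ν _
    simp only [Pi.smul_apply, sCLM_apply, smul_eq_mul]
    by_cases hj : j = ν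
    · subst hj; simp
    · rw [if_neg hj, mul_zero, if_neg (fun h => hj h.symm)]
  rw [Finset.sum_congr rfl this, Finset.sum_ite_eq']
  simp

lemma dvC_Ymap (ψ : Fin n → C1 r ℝ) (x : Fin n → ℝ) (t : ℝ) (j : Fin n) :
    dvC (Ymap ψ x) t j = x j * dvC (ψ j) t := by
  have h : dvC (Ymap ψ x) t = ∑ ν, x ν • sCLM n ν (dvC (ψ ν) t) := by
    rw [← dvCl_apply]
    show dvCl r (Fin n → ℝ) t (∑ ν, x ν • singleC1 ν (ψ ν)) = _
    rw [map_sum]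
    congr 1; funext ν
    rw [map_smul, dvCl_apply, dvC_singleC1]
  rw [h, Finset.sum_apply]
  have : ∀ ν ∈ Finset.univ, (x ν • sCLM n ν (dvC (ψ ν) t)) j
      = if ν = j then x j * dvC (ψ j) t else 0 := by
    intro ν _
    simp only [Pi.smul_apply, sCLM_apply, smul_eq_mul]
    by_cases hj : j = ν
    · subst hj; simp
    · rw [if_neg hj, mul_zero, if_neg (fun h => hj h.symm)]
  rw [Finset.sum_congr rfl this, Finset.sum_ite_eq']
  simp

/-- `R` maps into `X₀`. -/
lemma dvC_RK_zero (ψ : Fin n → C1 r ℝ) (hψ1 : ∀ ν, dvC (ψ ν) 0 = 1)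
    (φ : C1 r (Fin n → ℝ)) : dvC (RKmap ψ φ) 0 = 0 := by
  funext j
  rw [RKmap, dvC_sub]
  simp only [Pi.sub_apply, Pi.zero_apply]
  rw [dvC_Ymap, hψ1]
  ring

lemma RK_decomp (ψ : Fin n → C1 r ℝ) (φ : C1 r (Fin n → ℝ)) :
    φ = RKmap ψ φ + Ymap ψ (dvC φ 0) := by
  rw [RKmap]; abel

end aux2
section aux3
variable {r : ℝ} {n kk : ℕ} {F : Type*} [NormedAddCommGroup F] [NormedSpace ℝ F]
variable (S : Setting r n kk F)

lemma Lof_continuous : Continuous (fun φ : C1 r (Fin n → ℝ) => S.Lof φ) :=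
  S.L.continuous.comp (continuous_fst.comp continuous_subtype_val)

lemma Lof_sub (φ ξ : C1 r (Fin n → ℝ)) : S.Lof (φ - ξ) = S.Lof φ - S.Lof ξ := by
  simp only [Setting.Lof]
  have : ((φ - ξ : C1 r (Fin n → ℝ)) : C(Icc0 r, Fin n → ℝ) × C(Icc0 r, Fin n → ℝ)).1
      = φ.1.1 - ξ.1.1 := rfl
  rw [this, map_sub]

lemma Lof_Ymap (ψ : Fin n → C1 r ℝ) (hψL : ∀ ν, S.L (singleC1 ν (ψ ν)).1.1 = 0)
    (x : Fin n → ℝ) : S.Lof (Ymap ψ x) = 0 := by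
  simp only [Setting.Lof]
  have h : ((Ymap ψ x : C1 r (Fin n → ℝ)) : C(Icc0 r, Fin n → ℝ) × C(Icc0 r, Fin n → ℝ)).1
      = ∑ ν, x ν • (singleC1 ν (ψ ν)).1.1 := by
    show ((∑ ν, x ν • singleC1 ν (ψ ν) : C1 r (Fin n → ℝ)) :
      C(Icc0 r, Fin n → ℝ) × C(Icc0 r, Fin n → ℝ)).1 = _
    rw [Submodule.coe_sum]
    rw [Prod.fst_sum]
    congr 1
  rw [h, map_sum]
  refine Finset.sum_eq_zero fun ν _ => ?_
  rw [map_smul, hψL, smul_zero]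

lemma Lof_RK (ψ : Fin n → C1 r ℝ) (hψL : ∀ ν, S.L (singleC1 ν (ψ ν)).1.1 = 0)
    (φ : C1 r (Fin n → ℝ)) : S.Lof (RKmap ψ φ) = S.Lof φ := by
  rw [RKmap, Lof_sub, Lof_Ymap S ψ hψL, sub_zero]

end aux3
section core
set_option maxHeartbeats 2000000
set_option synthInstance.maxHeartbeats 1000000

noncomputable instance instC1NACG (r : ℝ) (E : Type*) [NormedAddCommGroup E]
    [NormedSpace ℝ E] : NormedAddCommGroup (C1 r E) :=
  inferInstance
variable {r : ℝ} {n kk : ℕ} {F : Type*} [NormedAddCommGroup F] [NormedSpace ℝ F]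

lemma evC_decomp (ψ : Fin n → C1 r ℝ) (φ : C1 r (Fin n → ℝ)) (t : ℝ) (j : Fin n) :
    evC φ t j = evC (RKmap ψ φ) t j + dvC φ 0 j * evC (ψ j) t := by
  conv_lhs => rw [RK_decomp ψ φ]
  rw [← evCl_apply, map_add, evCl_apply, evCl_apply]
  rw [Pi.add_apply, evC_Ymap]

lemma core (hr : 0 < r) (S : Setting r n kk F) (ψ : Fin n → C1 r ℝ)
    (hψL : ∀ ν, S.L (singleC1 ν (ψ ν)).1.1 = 0)
    (hψ0 : ∀ ν, evC (ψ ν) 0 = 0)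
    (φ₀ : C1 r (Fin n → ℝ)) (hφ₀ : φ₀ ∈ S.XfJ Finset.univ)
    (M : ℝ) (hM0 : 0 ≤ M)
    (hM : ∀ φ ∈ S.Xf, ‖RKmap ψ φ - RKmap ψ φ₀‖ < 1 → ‖S.g (S.hat φ)‖ ≤ M) :
    ∃ O, IsOpen O ∧ RKmap ψ φ₀ ∈ O ∧
      Set.InjOn (RKmap ψ) {φ | φ ∈ S.Xf ∧ RKmap ψ φ ∈ O} := by
  obtain ⟨hφ₀Xf, hφ₀U, hφ₀WJ⟩ := hφ₀
  have hd0 : ∀ k, S.d k (S.Lof φ₀) = 0 := fun k => hφ₀WJ.2.1 k (Finset.mem_univ k)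
  set χ := RKmap ψ φ₀ with hχ
  set c₀ := evC φ₀ 0 with hc₀
  have hv₀ : S.hat φ₀ = fun _ => c₀ := by
    funext k
    show evC φ₀ (-(S.d k (S.Lof φ₀))) = c₀
    rw [hd0, neg_zero]
  have hv₀V : S.hat φ₀ ∈ S.V := hφ₀Xf.1.2
  have hχ0 : evC χ 0 = c₀ := by
    funext j
    have := evC_decomp ψ φ₀ 0 j
    rw [hψ0 j, mul_zero, add_zero] at this
    exact this.symm
  -- Lipschitz constant near S.hat φ₀
  have hcd : ContDiffAt ℝ 1 S.g (S.hat φ₀) := S.g_smooth.contDiffAt (S.Vopen.mem_nhds hv₀V)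
  obtain ⟨K, tt, htn, hlip⟩ := hcd.exists_lipschitzOnWith
  obtain ⟨ρV, hρV, hball⟩ := Metric.mem_nhds_iff.1 (Filter.inter_mem htn (S.Vopen.mem_nhds hv₀V))
  set Λ := (K : ℝ) with hΛ
  have hΛ0 : 0 ≤ Λ := K.2
  set ε' := min (ρV / (3 * (M + 1))) (1 / (2 * (Λ + 1))) with hε'def
  have hε' : 0 < ε' := lt_min (by positivity) (by positivity)
  have h0mem : (0 : ℝ) ∈ Icc0 r := ⟨by linarith, le_refl 0⟩
  -- modulus of continuity
  have hΘ : ContinuousWithinAt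
      (fun s : ℝ => ((fun ν => evC (ψ ν) s : Fin n → ℝ), evC χ s)) (Icc0 r) 0 :=
    ContinuousWithinAt.prodMk
      (continuousWithinAt_pi.2 fun ν => (continuousOn_evC (ψ ν)) 0 h0mem)
      ((continuousOn_evC χ) 0 h0mem)
  obtain ⟨δ, hδpos, hδ'⟩ := Metric.continuousWithinAt_iff.1 hΘ (min ε' (ρV / 3))
    (lt_min hε' (by positivity))
  -- the open set
  set W' := S.W ∩ ⋂ k, (S.W ∩ (S.d k) ⁻¹' Set.Iio δ) with hW'def
  have hW'open : IsOpen W' :=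
    S.Wopen.inter (isOpen_iInter_of_finite fun k =>
      (S.d_smooth k).continuousOn.isOpen_inter_preimage S.Wopen isOpen_Iio)
  have hw₀W' : S.Lof φ₀ ∈ W' :=
    ⟨hφ₀WJ.1, Set.mem_iInter.2 fun k => ⟨hφ₀WJ.1, by
      simp only [Set.mem_preimage, Set.mem_Iio, hd0 k]; exact hδpos⟩⟩
  set O := Metric.ball χ (min 1 (ρV / 3)) ∩ (fun φ => S.Lof φ) ⁻¹' W' with hOdef
  refine ⟨O, Metric.isOpen_ball.inter (hW'open.preimage (Lof_continuous S)), ?_, ?_⟩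
  · exact ⟨Metric.mem_ball_self (lt_min one_pos (by positivity)),
      by simp only [Set.mem_preimage]; rw [Lof_RK S ψ hψL]; exact hw₀W'⟩
  -- the key estimate
  have main : ∀ φ ∈ S.Xf, RKmap ψ φ ∈ O →
      (∀ k j, S.hat φ k j = evC (RKmap ψ φ) (-(S.d k (S.Lof φ))) j
          + dvC φ 0 j * evC (ψ j) (-(S.d k (S.Lof φ)))) ∧
      (∀ k ν, |evC (ψ ν) (-(S.d k (S.Lof φ)))| ≤ ε') ∧
      S.hat φ ∈ tt := by
    intro φ hφ hO
    have hLη : S.Lof (RKmap ψ φ) = S.Lof φ := Lof_RK S ψ hψL φ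
    have hw : S.Lof φ ∈ W' := by
      have := hO.2
      simp only [Set.mem_preimage] at this
      rwa [hLη] at this
    have hWφ : S.Lof φ ∈ S.W := hw.1
    have hdlt : ∀ k, S.d k (S.Lof φ) < δ := fun k => (Set.mem_iInter.1 hw.2 k).2
    have hdmem : ∀ k, S.d k (S.Lof φ) ∈ Set.Icc (0:ℝ) r := fun k => S.d_mem k _ hWφ
    have htd : ∀ k, -(S.d k (S.Lof φ)) ∈ Icc0 r := fun k =>
      ⟨by linarith [(hdmem k).2], by linarith [(hdmem k).1]⟩
    have hform : ∀ k j, S.hat φ k j = evC (RKmap ψ φ) (-(S.d k (S.Lof φ))) j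
        + dvC φ 0 j * evC (ψ j) (-(S.d k (S.Lof φ))) := fun k j =>
      evC_decomp ψ φ (-(S.d k (S.Lof φ))) j
    -- apply the modulus
    have hnear : ∀ k, dist ((fun ν => evC (ψ ν) (-(S.d k (S.Lof φ))) : Fin n → ℝ),
        evC χ (-(S.d k (S.Lof φ))))
        ((fun ν => evC (ψ ν) 0 : Fin n → ℝ), evC χ 0) < min ε' (ρV / 3) := by
      intro k
      refine hδ' (htd k) ?_
      rw [Real.dist_eq, sub_zero, abs_of_nonpos (by linarith [(hdmem k).1])]
      simpa using hdlt k
    have hψb : ∀ k ν, |evC (ψ ν) (-(S.d k (S.Lof φ)))| ≤ ε' := by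
      intro k ν
      have h1 := (hnear k).trans_le (min_le_left _ _)
      have h2 : dist (fun ν => evC (ψ ν) (-(S.d k (S.Lof φ))) : Fin n → ℝ)
          (fun ν => evC (ψ ν) 0 : Fin n → ℝ) < ε' :=
        lt_of_le_of_lt (by rw [Prod.dist_eq]; exact le_max_left _ _) h1
      have h3 := (dist_le_pi_dist (fun ν => evC (ψ ν) (-(S.d k (S.Lof φ))) : Fin n → ℝ)
        (fun ν => evC (ψ ν) 0 : Fin n → ℝ) ν).trans h2.le
      rwa [Real.dist_eq, hψ0 ν, sub_zero] at h3
    have hχb : ∀ k, ‖evC χ (-(S.d k (S.Lof φ))) - c₀‖ < ρV / 3 := by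
      intro k
      have h1 := (hnear k).trans_le (min_le_right _ _)
      have h2 : dist (evC χ (-(S.d k (S.Lof φ)))) (evC χ 0) < ρV / 3 :=
        lt_of_le_of_lt (by rw [Prod.dist_eq]; exact le_max_right _ _) h1
      rwa [dist_eq_norm, hχ0] at h2
    -- bound on the derivative value
    have hηχ : ‖RKmap ψ φ - χ‖ < min 1 (ρV / 3) := by
      have := hO.1
      rwa [Metric.mem_ball, dist_eq_norm] at this
    have hxM : ‖dvC φ 0‖ ≤ M := by
      have h1 : ‖RKmap ψ φ - RKmap ψ φ₀‖ < 1 := lt_of_lt_of_le hηχ (min_le_left _ _)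
      have h2 := hM φ hφ h1
      have h3 : dvC φ 0 = S.g (S.hat φ) := hφ.2
      rw [h3]; exact h2
    refine ⟨hform, hψb, ?_⟩
    -- hat φ ∈ ball (hat φ₀) ρV ⊆ tt
    have hmem : S.hat φ ∈ Metric.ball (S.hat φ₀) ρV := by
      rw [Metric.mem_ball]
      rw [dist_pi_lt_iff hρV]
      intro k
      rw [hv₀]
      rw [dist_pi_lt_iff hρV]
      intro j
      rw [Real.dist_eq, hform k j]
      have e1 : evC (RKmap ψ φ) (-(S.d k (S.Lof φ))) j
          + dvC φ 0 j * evC (ψ j) (-(S.d k (S.Lof φ))) - c₀ j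
          = (evC (RKmap ψ φ - χ) (-(S.d k (S.Lof φ))) j)
          + ((evC χ (-(S.d k (S.Lof φ))) - c₀) j)
          + dvC φ 0 j * evC (ψ j) (-(S.d k (S.Lof φ))) := by
        rw [evC_sub]
        simp only [Pi.sub_apply]
        ring
      rw [e1]
      have b1 : |evC (RKmap ψ φ - χ) (-(S.d k (S.Lof φ))) j| < ρV / 3 := by
        rw [← Real.norm_eq_abs]
        exact lt_of_le_of_lt ((norm_le_pi_norm _ j).trans (norm_evC_le _ (htd k)))
          (hηχ.trans_le (min_le_right _ _))
      have b2 : |(evC χ (-(S.d k (S.Lof φ))) - c₀) j| < ρV / 3 := by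
        rw [← Real.norm_eq_abs]
        exact lt_of_le_of_lt (norm_le_pi_norm _ j) (hχb k)
      have b3 : |dvC φ 0 j * evC (ψ j) (-(S.d k (S.Lof φ)))| ≤ ρV / 3 := by
        rw [abs_mul]
        have i1 : |dvC φ 0 j| ≤ M := by
          rw [← Real.norm_eq_abs]; exact (norm_le_pi_norm _ j).trans hxM
        have i2 : |evC (ψ j) (-(S.d k (S.Lof φ)))| ≤ ε' := hψb k j
        have i3 : ε' ≤ ρV / (3 * (M + 1)) := min_le_left _ _
        have : |dvC φ 0 j| * |evC (ψ j) (-(S.d k (S.Lof φ)))| ≤ M * ε' :=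
          mul_le_mul i1 i2 (abs_nonneg _) hM0
        refine this.trans ?_
        have hq : ρV / (3 * (M + 1)) * (3 * (M + 1)) = ρV :=
          div_mul_cancel₀ _ (by positivity)
        have h1 : M * ε' ≤ M * (ρV / (3 * (M + 1))) := mul_le_mul_of_nonneg_left i3 hM0
        have h2 : (0:ℝ) ≤ ρV / (3 * (M + 1)) := by positivity
        nlinarith [h1, hq, h2]
      calc |_ + _ + _| ≤ |_ + _| + |dvC φ 0 j * evC (ψ j) (-(S.d k (S.Lof φ)))| := abs_add_le _ _
        _ ≤ |evC (RKmap ψ φ - χ) (-(S.d k (S.Lof φ))) j| + |(evC χ (-(S.d k (S.Lof φ))) - c₀) j|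
            + |dvC φ 0 j * evC (ψ j) (-(S.d k (S.Lof φ)))| := by
              have := abs_add_le (evC (RKmap ψ φ - χ) (-(S.d k (S.Lof φ))) j)
                ((evC χ (-(S.d k (S.Lof φ))) - c₀) j)
              linarith
        _ < ρV := by linarith
    exact (hball hmem).1
  -- injectivity
  intro φ₁ h1 φ₂ h2 heq
  obtain ⟨hf1, hb1, ht1⟩ := main φ₁ h1.1 h1.2
  obtain ⟨hf2, hb2, ht2⟩ := main φ₂ h2.1 h2.2
  have hL12 : S.Lof φ₂ = S.Lof φ₁ := by
    rw [← Lof_RK S ψ hψL φ₁, ← Lof_RK S ψ hψL φ₂, heq]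
  set x := dvC φ₂ 0 - dvC φ₁ 0 with hx
  have hdiff : ∀ k j, S.hat φ₂ k j - S.hat φ₁ k j
      = x j * evC (ψ j) (-(S.d k (S.Lof φ₁))) := by
    intro k j
    have e2 := hf2 k j
    rw [hL12, ← heq] at e2
    rw [e2, hf1 k j]
    simp only [hx, Pi.sub_apply]
    ring
  have hdist : dist (S.hat φ₂) (S.hat φ₁) ≤ ε' * ‖x‖ := by
    rw [dist_pi_le_iff (by positivity)]
    intro k
    rw [dist_pi_le_iff (by positivity)]
    intro j
    rw [Real.dist_eq, hdiff k j, abs_mul, mul_comm]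
    have : |x j| ≤ ‖x‖ := by rw [← Real.norm_eq_abs]; exact norm_le_pi_norm _ j
    exact mul_le_mul (hb1 k j) this (abs_nonneg _) hε'.le
  have hxg : x = S.g (S.hat φ₂) - S.g (S.hat φ₁) := by
    rw [hx, h1.1.2, h2.1.2]; rfl
  have hkey : ‖x‖ ≤ Λ * (ε' * ‖x‖) := by
    calc ‖x‖ = dist (S.g (S.hat φ₂)) (S.g (S.hat φ₁)) := by rw [dist_eq_norm, hxg]
      _ ≤ Λ * dist (S.hat φ₂) (S.hat φ₁) := hlip.dist_le_mul _ ht2 _ ht1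
      _ ≤ Λ * (ε' * ‖x‖) := mul_le_mul_of_nonneg_left hdist hΛ0
  have hxz : x = 0 := by
    have hε2 : ε' ≤ 1 / (2 * (Λ + 1)) := min_le_right _ _
    have hnx : 0 ≤ ‖x‖ := norm_nonneg x
    have hΛu : Λ * (1 / (2 * (Λ + 1))) ≤ 1 / 2 := by
      rw [mul_one_div, div_le_div_iff₀ (by positivity) (by norm_num)]
      linarith
    have h5 : Λ * ε' ≤ 1 / 2 := (mul_le_mul_of_nonneg_left hε2 hΛ0).trans hΛu
    have h6 : (Λ * ε') * ‖x‖ ≤ (1 / 2) * ‖x‖ := mul_le_mul_of_nonneg_right h5 hnx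
    have : ‖x‖ = 0 := by nlinarith [hkey, h6, hnx]
    exact norm_eq_zero.1 this
  have hd12 : dvC φ₂ 0 = dvC φ₁ 0 := by
    have := sub_eq_zero.1 hxz
    exact this
  calc φ₁ = RKmap ψ φ₁ + Ymap ψ (dvC φ₁ 0) := RK_decomp ψ φ₁
    _ = RKmap ψ φ₂ + Ymap ψ (dvC φ₂ 0) := by rw [heq, hd12]
    _ = φ₂ := (RK_decomp ψ φ₂).symm


lemma coreK (S : Setting r n kk F) (ψ : Fin n → C1 r ℝ)
    (hψ0 : ∀ ν, evC (ψ ν) 0 = 0)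
    (hK : S.U = S.UJ (Finset.univ : Finset (Fin kk))) :
    Set.InjOn (RKmap ψ) S.Xf := by
  intro φ₁ h1 φ₂ h2 heq
  have hz : ∀ φ, φ ∈ S.Xf → ∀ k, S.d k (S.Lof φ) = 0 := by
    intro φ hφ k
    have hU := hφ.1
    rw [hK] at hU
    exact hU.2.2.1 k (Finset.mem_univ k)
  have hev : ∀ φ : C1 r (Fin n → ℝ), evC φ 0 = evC (RKmap ψ φ) 0 := by
    intro φ; funext j
    rw [evC_decomp ψ φ 0 j, hψ0, mul_zero, add_zero]
  have hhat : ∀ φ ∈ S.Xf, S.hat φ = fun _ => evC (RKmap ψ φ) 0 := by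
    intro φ hφ; funext k
    show evC φ (-(S.d k (S.Lof φ))) = _
    rw [hz φ hφ k, neg_zero, hev φ]
  have h12 : S.hat φ₁ = S.hat φ₂ := by rw [hhat φ₁ h1, hhat φ₂ h2, heq]
  have hd12 : dvC φ₁ 0 = dvC φ₂ 0 := by
    rw [h1.2, h2.2]
    show S.g _ = S.g _
    rw [h12]
  calc φ₁ = RKmap ψ φ₁ + Ymap ψ (dvC φ₁ 0) := RK_decomp ψ φ₁
    _ = RKmap ψ φ₂ + Ymap ψ (dvC φ₂ 0) := by rw [heq, hd12]
    _ = φ₂ := (RK_decomp ψ φ₂).symm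

lemma hm_d1b (hk : 0 < kk) (S : Setting r n kk F) (ψ : Fin n → C1 r ℝ)
    (hψ0 : ∀ ν, evC (ψ ν) 0 = 0)
    (φ₀ : C1 r (Fin n → ℝ)) (hd : S.HypD1B hk) :
    ∃ M, 0 ≤ M ∧ ∀ φ ∈ S.Xf, ‖RKmap ψ φ - RKmap ψ φ₀‖ < 1 → ‖S.g (S.hat φ)‖ ≤ M := by
  obtain ⟨hd1, hbd⟩ := hd
  set c₀ := evC φ₀ 0 with hc₀
  have hB := hbd (Metric.closedBall c₀ 1) Metric.isBounded_closedBall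
  obtain ⟨C, hC⟩ := hB.exists_norm_le
  refine ⟨max C 0, le_max_right _ _, ?_⟩
  intro φ hφ hlt
  have hU : φ ∈ S.U := hφ.1
  have hWφ : S.Lof φ ∈ S.W := hU.1
  have hev : ∀ ξ : C1 r (Fin n → ℝ), evC ξ 0 = evC (RKmap ψ ξ) 0 := by
    intro ξ; funext j
    rw [evC_decomp ψ ξ 0 j, hψ0, mul_zero, add_zero]
  have hfirst : S.hat φ ⟨0, hk⟩ = evC (RKmap ψ φ) 0 := by
    show evC φ (-(S.d ⟨0, hk⟩ (S.Lof φ))) = _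
    rw [hd1 _ hWφ, neg_zero, hev φ]
  have hmem : S.hat φ ⟨0, hk⟩ ∈ Metric.closedBall c₀ 1 := by
    rw [Metric.mem_closedBall, hfirst, hc₀, hev φ₀, dist_eq_norm, ← evC_sub]
    have h0 : (0 : ℝ) ∈ Icc0 r := by
      constructor
      · have := (S.d_mem ⟨0, hk⟩ _ hWφ).2
        have h1 := (S.d_mem ⟨0, hk⟩ _ hWφ).1
        linarith
      · exact le_refl 0
    exact (norm_evC_le _ h0).trans hlt.le
  exact (hC _ ⟨S.hat φ, ⟨hU.2, hmem⟩, rfl⟩).trans (le_max_left _ _)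

end core
set_option maxHeartbeats 2000000 in
/-- Proposition 3.4. -/
theorem statement6 (hr : 0 < r) (hk : 0 < kk) (S : Setting r n kk F)
    (hUK : (S.UJ (Finset.univ : Finset (Fin kk))).Nonempty)
    (z : ℝ) (hz : z ∈ Set.Ioo (-r) 0) (ψ : Fin n → C1 r ℝ)
    (hψL : ∀ ν, S.L (singleC1 ν (ψ ν)).1.1 = 0)
    (hψ0 : ∀ ν, evC (ψ ν) 0 = 0)
    (hψ1 : ∀ ν, dvC (ψ ν) 0 = 1)
    (hψz : ∀ ν, ∀ t ∈ Set.Icc (-r) z, evC (ψ ν) t = 0)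
    (hyp : S.HypB ∨ S.HypD1B hk ∨ S.U = S.UJ (Finset.univ : Finset (Fin kk))) :
    ∃ Vc : C1 r (Fin n → ℝ) → Set (C1 r (Fin n → ℝ)),
      (∀ χ ∈ RKmap ψ '' S.XfJ (Finset.univ : Finset (Fin kk)),
        χ ∈ Vc χ ∧ (∃ O, IsOpen O ∧ Vc χ = (X0sub r n : Set (C1 r (Fin n → ℝ))) ∩ O) ∧
        Set.InjOn (RKmap ψ) (S.Xf ∩ (RKmap ψ) ⁻¹' (Vc χ))) ∧
      Set.InjOn (RKmap ψ)
        (S.Xf ∩ ⋃ χ ∈ RKmap ψ '' S.XfJ (Finset.univ : Finset (Fin kk)),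
          (RKmap ψ) ⁻¹' (Vc χ)) := by
  have key : ∀ χ ∈ RKmap ψ '' S.XfJ (Finset.univ : Finset (Fin kk)),
      ∃ O, IsOpen O ∧ χ ∈ O ∧
        Set.InjOn (RKmap ψ) {φ | φ ∈ S.Xf ∧ RKmap ψ φ ∈ O} := by
    rintro χ ⟨φ₀, hφ₀, rfl⟩
    rcases hyp with hb | hd | hK
    · obtain ⟨M₀, hM₀⟩ := hb
      refine core hr S ψ hψL hψ0 φ₀ hφ₀ (max M₀ 0) (le_max_right _ _) ?_
      intro φ hφ _
      exact (hM₀ _ hφ.1.2).trans (le_max_left _ _)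
    · obtain ⟨M, hM0, hM⟩ := hm_d1b hk S ψ hψ0 φ₀ hd
      exact core hr S ψ hψL hψ0 φ₀ hφ₀ M hM0 hM
    · refine ⟨Set.univ, isOpen_univ, Set.mem_univ _, ?_⟩
      intro φ₁ h1 φ₂ h2 heq
      exact coreK S ψ hψ0 hK h1.1 h2.1 heq
  choose! O hO1 hO2 hO3 using key
  refine ⟨fun χ => (X0sub r n : Set (C1 r (Fin n → ℝ))) ∩ O χ, ?_, ?_⟩
  · intro χ hχ
    refine ⟨⟨?_, hO2 χ hχ⟩, ⟨O χ, hO1 χ hχ, rfl⟩, ?_⟩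
    · obtain ⟨φ₀, _, rfl⟩ := hχ
      exact dvC_RK_zero ψ hψ1 φ₀
    · refine Set.InjOn.mono ?_ (hO3 χ hχ)
      intro φ hφ
      exact ⟨hφ.1, hφ.2.2⟩
  · intro φ₁ h1 φ₂ h2 heq
    obtain ⟨hXf1, hU1⟩ := h1
    obtain ⟨hXf2, hU2⟩ := h2
    rw [Set.mem_iUnion₂] at hU1
    obtain ⟨χ, hχ, hpre⟩ := hU1
    have hpre2 : RKmap ψ φ₂ ∈ (X0sub r n : Set (C1 r (Fin n → ℝ))) ∩ O χ := by
      rw [← heq]; exact hpre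
    exact hO3 χ hχ ⟨hXf1, (Set.mem_preimage.1 hpre).2⟩ ⟨hXf2, hpre2.2⟩ heq
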